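/- For every k ∈ ℕ there exists N ∈ ℕ (depending only on k) such that every finite simple graph G of treedepth at most k contains an induced subgraph G' with at most N vertices satisfying: G admits a 1-queue layout if and only if G' admits a 1-queue layout. -/

import Mathlib

/-- `G` admits a 1-queue layout: a linear order of the vertices (given by an
injection `f` into `ℕ`) in which no two edges nest. -/
def HasOneQueueLayout {V : Type*} (G : SimpleGraph V) : Prop :=
  ∃ f : V → ℕ, Function.Injective f ∧
    ∀ u v w x : V, G.Adj u v → G.Adj w x →
      ¬ (f u < f w ∧ f w < f x ∧ f x < f v)

/-- A rooted forest on the vertex set `V`, given by a parent function and a depth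
function: roots (the fixed points of `par`) have depth 1, and every non-root
vertex is one level deeper than its parent. -/
structure TDForest (V : Type*) where
  par : V → V
  depth : V → ℕ
  depth_root : ∀ v : V, par v = v → depth v = 1
  depth_par : ∀ v : V, par v ≠ v → depth v = depth (par v) + 1

/-- `u` is an ancestor of `v` (including `u = v`) in the rooted forest `F`. -/
def TDForest.Anc {V : Type*} (F : TDForest V) (u v : V) : Prop :=
  ∃ n : ℕ, F.par^[n] v = u

/-- `F` is a treedepth decomposition of `G`: the endpoints of every edge of `G`
are in ancestor-descendant relation in `F`. -/
def IsTDForestDecomp {V : Type*} (G : SimpleGraph V) (F : TDForest V) : Prop :=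
  ∀ u v : V, G.Adj u v → F.Anc u v ∨ F.Anc v u


theorem layout_transfer {V W : Type*} {G : SimpleGraph V} {H : SimpleGraph W}
    (g : V → W) (hg : Function.Injective g)
    (hadj : ∀ u v, G.Adj u v ↔ H.Adj (g u) (g v)) :
    HasOneQueueLayout H → HasOneQueueLayout G := by
  rintro ⟨f, hf, hq⟩
  exact ⟨f ∘ g, hf.comp hg, fun u v w x h1 h2 =>
    hq (g u) (g v) (g w) (g x) ((hadj u v).1 h1) ((hadj w x).1 h2)⟩

theorem layout_induce {V : Type*} {G : SimpleGraph V} (S : Set V) :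
    HasOneQueueLayout G → HasOneQueueLayout (G.induce S) := by
  refine layout_transfer Subtype.val Subtype.val_injective ?_
  intro u v; simp [SimpleGraph.comap]

theorem layout_empty {V : Type*} (G : SimpleGraph V) :
    HasOneQueueLayout (G.induce (∅ : Set V)) :=
  ⟨fun v => 0, fun a => absurd a.2 (Set.notMem_empty a.1), fun u => absurd u.2 (Set.notMem_empty u.1)⟩

theorem layout_univ {V : Type*} {G : SimpleGraph V} :
    HasOneQueueLayout (G.induce (Set.univ : Set V)) → HasOneQueueLayout G := by
  refine layout_transfer (fun v => ⟨v, Set.mem_univ v⟩) (fun a b h => by cases h; rfl) ?_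
  intro u v; simp [SimpleGraph.comap]

inductive CT : Type where
  | node (v : ℕ) (lab : List Bool) (ch : List CT)

namespace CT

def vx : CT → ℕ | node v _ _ => v
def lab : CT → List Bool | node _ l _ => l
def ch : CT → List CT | node _ _ c => c

theorem eta (t : CT) : t = node t.vx t.lab t.ch := by cases t; rfl

def vertsT : CT → List ℕ
  | node v _ c => v :: (c.attach.map (fun x => vertsT x.1)).flatten
  decreasing_by have := List.sizeOf_lt_of_mem x.2; simp; omega

def vertsF (cs : List CT) : List ℕ := (cs.map vertsT).flatten

theorem vertsT_node (v : ℕ) (l : List Bool) (c : List CT) :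
    vertsT (node v l c) = v :: vertsF c := by
  rw [vertsT, List.attach_map_val (f := vertsT)]; rfl

theorem vertsF_nil : vertsF [] = [] := rfl
theorem vertsF_cons (c : CT) (cs : List CT) : vertsF (c :: cs) = vertsT c ++ vertsF cs := by
  simp [vertsF]

theorem mem_vertsF {m : ℕ} {cs : List CT} : m ∈ vertsF cs ↔ ∃ c ∈ cs, m ∈ vertsT c := by
  simp [vertsF]

inductive Emb : CT → CT → Prop where
  | node {v v' : ℕ} {lab : List Bool} {ch ch' : List CT} :
      List.SublistForall₂ Emb ch ch' → Emb (.node v lab ch) (.node v' lab ch')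

theorem emb_refl : ∀ t : CT, Emb t t := by
  intro t
  induction t using CT.rec (motive_2 := fun cs => List.SublistForall₂ Emb cs cs) with
  | node v l c h => exact Emb.node h
  | nil => exact List.SublistForall₂.nil
  | cons c cs h hl => exact List.SublistForall₂.cons h hl

instance : IsRefl CT Emb := ⟨emb_refl⟩

theorem slf_comp {α : Type*} {R S T : α → α → Prop} :
    ∀ {l₂ l₃ : List α}, List.SublistForall₂ S l₂ l₃ →
      ∀ {l₁ : List α}, (∀ a ∈ l₁, ∀ b c, R a b → S b c → T a c) →
        List.SublistForall₂ R l₁ l₂ → List.SublistForall₂ T l₁ l₃ := by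
  intro l₂ l₃ h2
  induction h2 with
  | nil =>
    intro l₁ _ h1
    cases h1
    exact List.SublistForall₂.nil
  | @cons b c l₂ l₃ hbc _ ih =>
    intro l₁ h h1
    cases h1 with
    | nil => exact List.SublistForall₂.nil
    | @cons a _ l₁' _ hab h1' =>
      exact List.SublistForall₂.cons (h a (List.mem_cons_self) _ _ hab hbc)
        (ih (fun a ha => h a (List.mem_cons_of_mem _ ha)) h1')
    | cons_right h1' => exact List.SublistForall₂.cons_right (ih h h1')
  | @cons_right c l₂ l₃ _ ih =>
    intro l₁ h h1
    exact List.SublistForall₂.cons_right (ih h h1)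

theorem emb_trans : ∀ t₁ t₂ t₃ : CT, Emb t₁ t₂ → Emb t₂ t₃ → Emb t₁ t₃ := by
  have key : ∀ n (t₁ : CT), sizeOf t₁ ≤ n → ∀ t₂ t₃, Emb t₁ t₂ → Emb t₂ t₃ → Emb t₁ t₃ := by
    intro n
    induction n with
    | zero => intro t₁ h; cases t₁ <;> simp at h
    | succ n ih =>
      rintro ⟨v, l, c⟩ hsz t₂ t₃ h12 h23
      cases h12 with
      | @node _ v' _ _ ch' hc =>
        cases h23 with
        | @node _ v'' _ _ ch'' hc' =>
          refine Emb.node (slf_comp hc' (fun a ha b cc hab hbc => ?_) hc)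
          have hsa : sizeOf a < sizeOf (CT.node v l c) := by
            have := List.sizeOf_lt_of_mem ha; simp; omega
          exact ih a (by omega) b cc hab hbc
  intro t₁ t₂ t₃ h1 h2
  exact key (sizeOf t₁) t₁ le_rfl t₂ t₃ h1 h2

instance : IsTrans CT Emb := ⟨fun a b c => emb_trans a b c⟩

instance : IsPreorder CT Emb := {}

def Valid : ℕ → ℕ → CT → Prop
  | 0, _, _ => False
  | (h+1), d, t => t.lab.length = d ∧ ∀ x ∈ t.ch, Valid h (d+1) x

theorem valid_pwo : ∀ h d : ℕ, Set.PartiallyWellOrderedOn {t : CT | Valid h d t} Emb := by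
  intro h
  induction h with
  | zero =>
    intro d f
    exact absurd (f 0).2 (fun h => h)
  | succ h ih =>
    intro d f0
    let f : ℕ → CT := fun n => (f0 n).1
    have hf : ∀ n, f n ∈ {t : CT | Valid (h+1) d t} := fun n => (f0 n).2
    -- labels have length d
    have hlab : ∀ n, (f n).lab.length = d := fun n => (hf n).1
    have hch : ∀ n, ∀ x ∈ (f n).ch, Valid h (d+1) x := fun n => (hf n).2
    -- pigeonhole on labels
    obtain ⟨y, hy⟩ := Finite.exists_infinite_fiber (fun n => (fun i : Fin d => (f n).lab.getD i false))
    rw [Set.infinite_coe_iff] at hy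
    set p : ℕ → Prop := fun n => (fun i : Fin d => (f n).lab.getD i false) = y with hp
    have hpinf : (setOf p).Infinite := hy
    have hmono := Nat.nth_strictMono hpinf
    have hmem : ∀ n, p (Nat.nth p n) := fun n => Nat.nth_mem_of_infinite hpinf n
    have hlabeq : ∀ m n, (f (Nat.nth p m)).lab = (f (Nat.nth p n)).lab := by
      intro m n
      apply List.ext_getElem (by rw [hlab, hlab])
      intro i h1 h2
      have hi : i < d := by rw [hlab] at h1; exact h1
      have e1 := congrFun (hmem m) ⟨i, hi⟩
      have e2 := congrFun (hmem n) ⟨i, hi⟩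
      simp only at e1 e2
      rw [List.getD_eq_getElem _ _ h1] at e1
      rw [List.getD_eq_getElem _ _ h2] at e2
      rw [e1, e2]
    -- Higman on children
    have hig := (ih (d+1)).partiallyWellOrderedOn_sublistForall₂ Emb
    obtain ⟨m, n, hmn, hemb⟩ := hig (fun n => ⟨(f (Nat.nth p n)).ch,
      fun x hx => hch _ x hx⟩)
    refine ⟨Nat.nth p m, Nat.nth p n, hmono hmn, ?_⟩
    show Emb (f (Nat.nth p m)) (f (Nat.nth p n))
    rw [eta (f (Nat.nth p m)), eta (f (Nat.nth p n)), hlabeq m n]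
    exact Emb.node hemb


/-- no adjacency (w.r.t. `P`) between the vertex sets of two code trees -/
def NAdj (P : ℕ → ℕ → Prop) (c c' : CT) : Prop :=
  ∀ u ∈ vertsT c, ∀ w ∈ vertsT c', ¬ P u w ∧ ¬ P w u

def FaithT (P : ℕ → ℕ → Prop) : List ℕ → CT → Prop
  | anc, .node v l c =>
      l.length = anc.length ∧
      (∀ i (h1 : i < l.length) (h2 : i < anc.length),
        ((l[i] = true) ↔ P v anc[i]) ∧ ((l[i] = true) ↔ P anc[i] v)) ∧
      (∀ x ∈ c, FaithT P (v :: anc) x) ∧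
      List.Pairwise (NAdj P) c
  termination_by anc t => sizeOf t
  decreasing_by have := List.sizeOf_lt_of_mem ‹x ∈ c›; simp; omega

def FaithF (P : ℕ → ℕ → Prop) (anc : List ℕ) (cs : List CT) : Prop :=
  (∀ c ∈ cs, FaithT P anc c) ∧ List.Pairwise (NAdj P) cs

section Main

variable (P Q : ℕ → ℕ → Prop)

def Cross (anc anc' : List ℕ) (p : ℕ × ℕ) : Prop :=
  anc.length = anc'.length ∧
    ∀ i (h1 : i < anc.length) (h2 : i < anc'.length),
      (P p.1 anc[i] ↔ Q p.2 anc'[i]) ∧ (P anc[i] p.1 ↔ Q anc'[i] p.2)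

def Stmt1 (t t' : CT) : Prop :=
  ∀ anc anc', FaithT P anc t → FaithT Q anc' t' →
    ∃ L : List (ℕ × ℕ),
      L.map Prod.fst = vertsT t ∧
      (L.map Prod.snd).Sublist (vertsT t') ∧
      (∀ p ∈ L, ∀ q ∈ L, (P p.1 q.1 ↔ Q p.2 q.2)) ∧
      (∀ p ∈ L, Cross P Q anc anc' p)

def Stmt2 (cs cs' : List CT) : Prop :=
  ∀ anc anc', FaithF P anc cs → FaithF Q anc' cs' →
    ∃ L : List (ℕ × ℕ),
      L.map Prod.fst = vertsF cs ∧
      (L.map Prod.snd).Sublist (vertsF cs') ∧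
      (∀ p ∈ L, ∀ q ∈ L, (P p.1 q.1 ↔ Q p.2 q.2)) ∧
      (∀ p ∈ L, Cross P Q anc anc' p)

variable {P Q}

theorem stmt2_nil (cs' : List CT) : Stmt2 P Q [] cs' := by
  intro anc anc' _ _
  exact ⟨[], rfl, List.nil_sublist _, by simp, by simp⟩

theorem stmt2_skip {l₁ l₂ : List CT} (a : CT) (h : Stmt2 P Q l₁ l₂) :
    Stmt2 P Q l₁ (a :: l₂) := by
  intro anc anc' h1 h2
  obtain ⟨L, hfst, hsnd, hpq, hcr⟩ := h anc anc' h1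
    ⟨fun c hc => h2.1 c (List.mem_cons_of_mem _ hc), h2.2.of_cons⟩
  exact ⟨L, hfst, hsnd.trans (by rw [vertsF_cons]; exact List.sublist_append_right _ _),
    hpq, hcr⟩

theorem stmt2_cons {a₁ a₂ : CT} {l₁ l₂ : List CT}
    (h1 : Stmt1 P Q a₁ a₂) (h2 : Stmt2 P Q l₁ l₂) :
    Stmt2 P Q (a₁ :: l₁) (a₂ :: l₂) := by
  rintro anc anc' ⟨hf1, hpw1⟩ ⟨hf2, hpw2⟩
  obtain ⟨L₁, hfst1, hsnd1, hpq1, hcr1⟩ :=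
    h1 anc anc' (hf1 a₁ (List.mem_cons_self)) (hf2 a₂ (List.mem_cons_self))
  obtain ⟨L₂, hfst2, hsnd2, hpq2, hcr2⟩ :=
    h2 anc anc' ⟨fun c hc => hf1 c (List.mem_cons_of_mem _ hc), hpw1.of_cons⟩
      ⟨fun c hc => hf2 c (List.mem_cons_of_mem _ hc), hpw2.of_cons⟩
  refine ⟨L₁ ++ L₂, ?_, ?_, ?_, ?_⟩
  · rw [List.map_append, hfst1, hfst2, vertsF_cons]
  · rw [List.map_append, vertsF_cons]; exact hsnd1.append hsnd2
  · -- cross-pairs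
    have mem1fst : ∀ p ∈ L₁, p.1 ∈ vertsT a₁ := fun p hp => by
      rw [← hfst1]; exact List.mem_map_of_mem hp
    have mem2fst : ∀ p ∈ L₂, ∃ c ∈ l₁, p.1 ∈ vertsT c := fun p hp => by
      rw [← mem_vertsF, ← hfst2]; exact List.mem_map_of_mem hp
    have mem1snd : ∀ p ∈ L₁, p.2 ∈ vertsT a₂ := fun p hp =>
      hsnd1.subset (List.mem_map_of_mem hp)
    have mem2snd : ∀ p ∈ L₂, ∃ c ∈ l₂, p.2 ∈ vertsT c := fun p hp => by
      rw [← mem_vertsF]; exact hsnd2.subset (List.mem_map_of_mem hp)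
    intro p hp q hq
    rcases List.mem_append.1 hp with hp1 | hp2 <;> rcases List.mem_append.1 hq with hq1 | hq2
    · exact hpq1 p hp1 q hq1
    · obtain ⟨c, hc, hqc⟩ := mem2fst q hq2
      obtain ⟨c', hc', hqc'⟩ := mem2snd q hq2
      have n1 := (List.rel_of_pairwise_cons hpw1 hc) _ (mem1fst p hp1) _ hqc
      have n2 := (List.rel_of_pairwise_cons hpw2 hc') _ (mem1snd p hp1) _ hqc'
      exact iff_of_false n1.1 n2.1
    · obtain ⟨c, hc, hpc⟩ := mem2fst p hp2
      obtain ⟨c', hc', hpc'⟩ := mem2snd p hp2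
      have n1 := (List.rel_of_pairwise_cons hpw1 hc) _ (mem1fst q hq1) _ hpc
      have n2 := (List.rel_of_pairwise_cons hpw2 hc') _ (mem1snd q hq1) _ hpc'
      exact iff_of_false n1.2 n2.2
    · exact hpq2 p hp2 q hq2
  · intro p hp
    rcases List.mem_append.1 hp with hp1 | hp2
    · exact hcr1 p hp1
    · exact hcr2 p hp2

theorem stmt1_node (hP : ∀ a, ¬ P a a) (hQ : ∀ a, ¬ Q a a)
    {v v' : ℕ} {l : List Bool} {c c' : List CT}
    (h2 : Stmt2 P Q c c') : Stmt1 P Q (node v l c) (node v' l c') := by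
  intro anc anc' hf1 hf2
  unfold FaithT at hf1 hf2
  obtain ⟨hl1, hlab1, hch1, hpw1⟩ := hf1
  obtain ⟨hl2, hlab2, hch2, hpw2⟩ := hf2
  obtain ⟨L₀, hfst, hsnd, hpq, hcr⟩ := h2 (v :: anc) (v' :: anc') ⟨hch1, hpw1⟩ ⟨hch2, hpw2⟩
  refine ⟨(v, v') :: L₀, ?_, ?_, ?_, ?_⟩
  · rw [List.map_cons, hfst, vertsT_node]
  · rw [vertsT_node]; exact hsnd.cons₂ v'
  · intro p hp q hq
    rcases List.mem_cons.1 hp with rfl | hp0 <;> rcases List.mem_cons.1 hq with rfl | hq0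
    · exact iff_of_false (hP v) (hQ v')
    · -- p = (v,v'), q ∈ L₀ : use q's cross at index 0
      have := (hcr q hq0).2 0 (by simp) (by simp)
      simpa using this.2
    · have := (hcr p hp0).2 0 (by simp) (by simp)
      simpa using this.1
    · exact hpq p hp0 q hq0
  · intro p hp
    rcases List.mem_cons.1 hp with rfl | hp0
    · refine ⟨hl1 ▸ hl2, ?_⟩
      intro i hi1 hi2
      have hil : i < l.length := by omega
      constructor
      · exact ((hlab1 i hil hi1).1.symm.trans (hlab2 i hil hi2).1)
      · exact ((hlab1 i hil hi1).2.symm.trans (hlab2 i hil hi2).2)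
    · obtain ⟨hlen, hpt⟩ := hcr p hp0
      refine ⟨by simpa using hlen, ?_⟩
      intro i hi1 hi2
      have := hpt (i+1) (by simpa using hi1) (by simpa using hi2)
      simpa using this

theorem main_embF (hP : ∀ a, ¬ P a a) (hQ : ∀ a, ¬ Q a a) :
    ∀ {cs cs' : List CT}, List.SublistForall₂ Emb cs cs' → Stmt2 P Q cs cs' := by
  have mainT : ∀ {t t' : CT}, Emb t t' → Stmt1 P Q t t' := by
    intro t t' h
    refine Emb.rec (motive_1 := fun a b _ => Stmt1 P Q a b)
      (motive_2 := fun a b _ => Stmt2 P Q a b) ?_ ?_ ?_ ?_ h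
    · intro v v' lb chl chl' _ ih
      exact stmt1_node hP hQ ih
    · intro l; exact stmt2_nil l
    · intro a₁ a₂ l₁ l₂ _ _ ih1 ih2; exact stmt2_cons ih1 ih2
    · intro a l₁ l₂ _ ih; exact stmt2_skip a ih
  intro cs cs' h
  induction h with
  | nil => exact stmt2_nil _
  | cons h _ ih => exact stmt2_cons (mainT h) ih
  | cons_right _ ih => exact stmt2_skip _ ih

end Main
end CT

namespace TDForest

variable {V : Type*} (F : TDForest V)

theorem depth_pos (v : V) : 1 ≤ F.depth v := by
  by_cases h : F.par v = v
  · rw [F.depth_root v h]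
  · rw [F.depth_par v h]; omega

theorem depth_par_le (v : V) : F.depth (F.par v) ≤ F.depth v := by
  by_cases h : F.par v = v
  · rw [h]
  · rw [F.depth_par v h]; omega

theorem depth_iterate_le (n : ℕ) (v : V) : F.depth (F.par^[n] v) ≤ F.depth v := by
  induction n with
  | zero => rfl
  | succ n ih =>
    rw [Function.iterate_succ_apply']
    exact (F.depth_par_le _).trans ih

theorem iterate_eq_self (n : ℕ) (v : V) (h : F.depth (F.par^[n] v) = F.depth v) :
    F.par^[n] v = v := by
  induction n generalizing v with
  | zero => rfl
  | succ n ih =>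
    by_cases hr : F.par v = v
    · rw [Function.iterate_succ_apply, hr] at h ⊢
      exact ih v h
    · exfalso
      rw [Function.iterate_succ_apply] at h
      have h1 := F.depth_iterate_le n (F.par v)
      have h2 := F.depth_par v hr
      omega

theorem eq_of_iterates {a b : ℕ} {w u x : V} (ha : F.par^[a] w = u) (hb : F.par^[b] w = x)
    (hd : F.depth u = F.depth x) : u = x := by
  rcases le_total a b with h | h
  · obtain ⟨m, rfl⟩ := Nat.exists_eq_add_of_le h
    rw [add_comm, Function.iterate_add_apply, ha] at hb
    rw [← hb] at hd ⊢
    rw [F.iterate_eq_self m u hd.symm]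
  · obtain ⟨m, rfl⟩ := Nat.exists_eq_add_of_le h
    rw [add_comm, Function.iterate_add_apply, hb] at ha
    rw [← ha] at hd ⊢
    rw [F.iterate_eq_self m x hd]

theorem anc_depth_le {u w : V} (h : F.Anc u w) : F.depth u ≤ F.depth w := by
  obtain ⟨n, rfl⟩ := h; exact F.depth_iterate_le n w

theorem anc_trans_par {c u v : V} (h : F.Anc c u) (hp : F.par c = v) : F.Anc v u := by
  obtain ⟨n, hn⟩ := h
  exact ⟨n + 1, by rw [Function.iterate_succ_apply', hn, hp]⟩

/-- descendants of distinct siblings are not in ancestor relation -/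
theorem sibling_not_anc {c c' v u w : V} (hp : F.par c = v) (hc : c ≠ v)
    (hp' : F.par c' = v) (hc' : c' ≠ v) (hne : c ≠ c')
    (hu : F.Anc c u) (hw : F.Anc c' w) : ¬ F.Anc u w := by
  rintro ⟨a, ha⟩
  obtain ⟨m, hm⟩ := hu
  obtain ⟨b, hb⟩ := hw
  have hdc : F.depth c = F.depth c' := by
    rw [F.depth_par c (fun h => hc (h.symm.trans hp)),
      F.depth_par c' (fun h => hc' (h.symm.trans hp')), hp, hp']
  have hma : F.par^[m + a] w = c := by
    rw [Function.iterate_add_apply, ha, hm]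
  exact hne (F.eq_of_iterates hma hb hdc)

/-- descendants of distinct roots are not in ancestor relation -/
theorem root_not_anc {r r' u w : V} (hr : F.par r = r) (hr' : F.par r' = r')
    (hne : r ≠ r') (hu : F.Anc r u) (hw : F.Anc r' w) : ¬ F.Anc u w := by
  rintro ⟨a, ha⟩
  obtain ⟨m, hm⟩ := hu
  obtain ⟨b, hb⟩ := hw
  have hdc : F.depth r = F.depth r' := by rw [F.depth_root r hr, F.depth_root r' hr']
  have hma : F.par^[m + a] w = r := by rw [Function.iterate_add_apply, ha, hm]
  exact hne (F.eq_of_iterates hma hb hdc)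

theorem exists_root (u : V) : ∃ r n, F.par r = r ∧ F.par^[n] u = r := by
  have : ∀ d u, F.depth u ≤ d → ∃ r n, F.par r = r ∧ F.par^[n] u = r := by
    intro d
    induction d with
    | zero => intro u h; have := F.depth_pos u; omega
    | succ d ih =>
      intro u h
      by_cases hr : F.par u = u
      · exact ⟨u, 0, hr, rfl⟩
      · have hd := F.depth_par u hr
        obtain ⟨r, n, h1, h2⟩ := ih (F.par u) (by omega)
        exact ⟨r, n + 1, h1, by rw [Function.iterate_succ_apply]; exact h2⟩
  exact this (F.depth u) u le_rfl


variable {V : Type*} (F : TDForest V)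

attribute [local instance] Classical.propDecidable

noncomputable def childL [Fintype V] (v : V) : List V :=
  (Finset.univ.filter (fun u => F.par u = v ∧ u ≠ v)).toList

theorem mem_childL [Fintype V] {u v : V} : u ∈ F.childL v ↔ F.par u = v ∧ u ≠ v := by
  simp [childL]

theorem nodup_childL [Fintype V] (v : V) : (F.childL v).Nodup := Finset.nodup_toList _

noncomputable def ancChain : ℕ → V → List V
  | 0, _ => []
  | n+1, v => if F.par v = v then [] else F.par v :: ancChain n (F.par v)

noncomputable def strictAnc (v : V) : List V := ancChain F (F.depth v) v

theorem depth_pos' (v : V) : 1 ≤ F.depth v := by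
  by_cases h : F.par v = v
  · rw [F.depth_root v h]
  · rw [F.depth_par v h]; omega

theorem ancChain_length : ∀ (n : ℕ) (v : V), F.depth v ≤ n →
    (F.ancChain n v).length + 1 = F.depth v := by
  intro n
  induction n with
  | zero => intro v h; have := F.depth_pos' v; omega
  | succ n ih =>
    intro v h
    by_cases hr : F.par v = v
    · simp [ancChain, hr, F.depth_root v hr]
    · have hd := F.depth_par v hr
      simp only [ancChain, hr, if_false, List.length_cons]
      have := ih (F.par v) (by omega)
      omega

theorem strictAnc_length (v : V) : (F.strictAnc v).length + 1 = F.depth v :=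
  F.ancChain_length _ v le_rfl

theorem strictAnc_root {v : V} (h : F.par v = v) : F.strictAnc v = [] := by
  rw [strictAnc, F.depth_root v h]
  simp [ancChain, h]

theorem strictAnc_child {c v : V} (hp : F.par c = v) (hne : c ≠ v) :
    F.strictAnc c = v :: F.strictAnc v := by
  have hpc : F.par c ≠ c := fun h => hne (h.symm.trans hp)
  have hd : F.depth c = F.depth v + 1 := by rw [F.depth_par c hpc, hp]
  rw [strictAnc, hd]
  simp only [ancChain]
  rw [if_neg hpc, hp]
  rfl

end TDForest

section Build

attribute [local instance] Classical.propDecidable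

variable {V : Type} [Fintype V] (G : SimpleGraph V) (F : TDForest V) (ι : V → ℕ)

noncomputable def labOf (v : V) : List Bool :=
  (F.strictAnc v).map (fun a => decide (G.Adj v a))

noncomputable def build : ℕ → V → CT
  | 0, v => .node (ι v) (labOf G F v) []
  | h+1, v => .node (ι v) (labOf G F v) ((F.childL v).map (build h))

theorem build_shape : ∀ (h : ℕ) (v : V), ∃ cs, build G F ι h v = .node (ι v) (labOf G F v) cs := by
  intro h v
  cases h
  · exact ⟨[], rfl⟩
  · exact ⟨_, rfl⟩

theorem mem_self_build (h : ℕ) (v : V) : ι v ∈ CT.vertsT (build G F ι h v) := by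
  obtain ⟨cs, hcs⟩ := build_shape G F ι h v
  rw [hcs, CT.vertsT_node]
  exact List.mem_cons_self

theorem build_desc : ∀ (h : ℕ) (v : V) (m : ℕ), m ∈ CT.vertsT (build G F ι h v) →
    ∃ u, ι u = m ∧ F.Anc v u := by
  intro h
  induction h with
  | zero =>
    intro v m hm
    simp only [build, CT.vertsT_node, CT.vertsF_nil, List.mem_singleton] at hm
    exact ⟨v, hm.symm, 0, rfl⟩
  | succ h ih =>
    intro v m hm
    simp only [build, CT.vertsT_node] at hm
    rcases List.mem_cons.1 hm with rfl | hm'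
    · exact ⟨v, rfl, 0, rfl⟩
    · rw [CT.mem_vertsF] at hm'
      obtain ⟨c, hc, hmc⟩ := hm'
      rw [List.mem_map] at hc
      obtain ⟨c₀, hc₀, rfl⟩ := hc
      obtain ⟨u, hu, hanc⟩ := ih c₀ m hmc
      exact ⟨u, hu, F.anc_trans_par hanc (F.mem_childL.1 hc₀).1⟩

def Pof : ℕ → ℕ → Prop := fun m n => ∃ u w, ι u = m ∧ ι w = n ∧ G.Adj u w

variable {ι}

theorem Pof_iff (hι : Function.Injective ι) {u w : V} :
    Pof G ι (ι u) (ι w) ↔ G.Adj u w := by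
  constructor
  · rintro ⟨u', w', hu, hw, h⟩
    rwa [hι hu, hι hw] at h
  · intro h; exact ⟨u, w, rfl, rfl, h⟩

theorem Pof_irrefl (hι : Function.Injective ι) (a : ℕ) : ¬ Pof G ι a a := by
  rintro ⟨u, w, hu, hw, h⟩
  rw [← hw] at hu
  rw [hι hu] at h
  exact G.loopless.irrefl _ h

variable {G F}

theorem nadj_of_not_anc (hι : Function.Injective ι) (hdec : IsTDForestDecomp G F)
    {c c' : V} (h1 h2 : ℕ)
    (H : ∀ u w, F.Anc c u → F.Anc c' w → ¬ F.Anc u w ∧ ¬ F.Anc w u) :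
    CT.NAdj (Pof G ι) (build G F ι h1 c) (build G F ι h2 c') := by
  intro m hm m' hm'
  obtain ⟨u, hu, hancu⟩ := build_desc G F ι h1 c m hm
  obtain ⟨w, hw, hancw⟩ := build_desc G F ι h2 c' m' hm'
  obtain ⟨hnuw, hnwu⟩ := H u w hancu hancw
  constructor
  · rintro ⟨u', w', hu', hw', hadj⟩
    rw [← hu] at hu'; rw [← hw] at hw'
    rw [hι hu', hι hw'] at hadj
    rcases hdec u w hadj with h | h
    · exact hnuw h
    · exact hnwu h
  · rintro ⟨w', u', hw', hu', hadj⟩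
    rw [← hw] at hw'; rw [← hu] at hu'
    rw [hι hw', hι hu'] at hadj
    rcases hdec w u hadj with h | h
    · exact hnwu h
    · exact hnuw h

theorem build_nadj (hι : Function.Injective ι) (hdec : IsTDForestDecomp G F)
    {c c' v : V} (hc : c ∈ F.childL v) (hc' : c' ∈ F.childL v) (hne : c ≠ c')
    (h1 h2 : ℕ) :
    CT.NAdj (Pof G ι) (build G F ι h1 c) (build G F ι h2 c') := by
  obtain ⟨hp, hcv⟩ := F.mem_childL.1 hc
  obtain ⟨hp', hcv'⟩ := F.mem_childL.1 hc'
  refine nadj_of_not_anc hι hdec h1 h2 (fun u w hu hw => ?_)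
  exact ⟨F.sibling_not_anc hp hcv hp' hcv' hne hu hw,
    F.sibling_not_anc hp' hcv' hp hcv hne.symm hw hu⟩

theorem root_nadj (hι : Function.Injective ι) (hdec : IsTDForestDecomp G F)
    {r r' : V} (hr : F.par r = r) (hr' : F.par r' = r') (hne : r ≠ r') (h1 h2 : ℕ) :
    CT.NAdj (Pof G ι) (build G F ι h1 r) (build G F ι h2 r') := by
  refine nadj_of_not_anc hι hdec h1 h2 (fun u w hu hw => ?_)
  exact ⟨F.root_not_anc hr hr' hne hu hw, F.root_not_anc hr' hr hne.symm hw hu⟩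

variable (k : ℕ)

theorem faith_build (hι : Function.Injective ι) (hdec : IsTDForestDecomp G F)
    (hdep : ∀ v : V, F.depth v ≤ k) :
    ∀ (h : ℕ) (v : V), F.depth v + h = k + 1 →
      CT.FaithT (Pof G ι) ((F.strictAnc v).map ι) (build G F ι h v) := by
  intro h
  induction h with
  | zero => intro v hv; have := hdep v; omega
  | succ h ih =>
    intro v hv
    simp only [build]
    unfold CT.FaithT
    refine ⟨by simp [labOf], ?_, ?_, ?_⟩
    · intro i h1 h2
      simp only [labOf, List.length_map] at h1
      simp only [labOf, List.getElem_map, decide_eq_true_eq]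
      constructor
      · exact (Pof_iff G hι).symm
      · rw [G.adj_comm]; exact (Pof_iff G hι).symm
    · intro x hx
      rw [List.mem_map] at hx
      obtain ⟨c₀, hc₀, rfl⟩ := hx
      obtain ⟨hp, hcv⟩ := F.mem_childL.1 hc₀
      have hpc : F.par c₀ ≠ c₀ := fun hh => hcv (hh.symm.trans hp)
      have hd : F.depth c₀ = F.depth v + 1 := by rw [F.depth_par c₀ hpc, hp]
      have := ih c₀ (by omega)
      rwa [F.strictAnc_child hp hcv, List.map_cons] at this
    · rw [List.pairwise_map]
      exact List.Pairwise.imp_of_mem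
        (fun ha hb hne => build_nadj hι hdec ha hb hne h h) (F.nodup_childL v)

theorem valid_build (hdep : ∀ v : V, F.depth v ≤ k) :
    ∀ (h : ℕ) (v : V), F.depth v + h = k + 1 →
      CT.Valid h (F.depth v - 1) (build G F ι h v) := by
  intro h
  induction h with
  | zero => intro v hv; have := hdep v; omega
  | succ h ih =>
    intro v hv
    refine ⟨?_, ?_⟩
    · show (labOf G F v).length = F.depth v - 1
      have := F.strictAnc_length v
      simp only [labOf, List.length_map]
      omega
    · show ∀ x ∈ ((F.childL v).map (build G F ι h)), CT.Valid h (F.depth v - 1 + 1) x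
      intro x hx
      rw [List.mem_map] at hx
      obtain ⟨c₀, hc₀, rfl⟩ := hx
      obtain ⟨hp, hcv⟩ := F.mem_childL.1 hc₀
      have hpc : F.par c₀ ≠ c₀ := fun hh => hcv (hh.symm.trans hp)
      have hd : F.depth c₀ = F.depth v + 1 := by rw [F.depth_par c₀ hpc, hp]
      have h1 := F.depth_pos' v
      have := ih c₀ (by omega)
      have he : F.depth c₀ - 1 = F.depth v - 1 + 1 := by omega
      rwa [he] at this

theorem mem_build (hdep : ∀ v : V, F.depth v ≤ k) :
    ∀ (n : ℕ) (u v : V) (h : ℕ), F.par^[n] u = v → F.depth v + h = k + 1 →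
      ι u ∈ CT.vertsT (build G F ι h v) := by
  intro n
  induction n with
  | zero =>
    intro u v h hn hh
    have : u = v := hn
    subst this
    exact mem_self_build G F ι h u
  | succ n ih =>
    intro u v h hn hh
    rw [Function.iterate_succ_apply'] at hn
    by_cases hwv : F.par^[n] u = v
    · exact ih u v h hwv hh
    · have hpw : F.par (F.par^[n] u) = v := hn
      have hpc : F.par (F.par^[n] u) ≠ F.par^[n] u := fun hh2 => hwv (hh2.symm.trans hpw)
      have hdw : F.depth (F.par^[n] u) = F.depth v + 1 := by rw [F.depth_par _ hpc, hpw]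
      cases h with
      | zero => have := hdep (F.par^[n] u); omega
      | succ h' =>
        have hc₀ : F.par^[n] u ∈ F.childL v := F.mem_childL.2 ⟨hpw, hwv⟩
        have hmem := ih u (F.par^[n] u) h' rfl (by omega)
        simp only [build, CT.vertsT_node]
        apply List.mem_cons_of_mem
        rw [CT.mem_vertsF]
        exact ⟨build G F ι h' (F.par^[n] u), List.mem_map_of_mem hc₀, hmem⟩

theorem nodup_vertsF_aux : ∀ cs : List CT, (∀ c ∈ cs, (CT.vertsT c).Nodup) →
    cs.Pairwise (fun c c' => ∀ m ∈ CT.vertsT c, m ∉ CT.vertsT c') →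
    (CT.vertsF cs).Nodup := by
  intro cs
  induction cs with
  | nil => intro _ _; simp [CT.vertsF_nil]
  | cons c cs ih =>
    intro h1 h2
    rw [CT.vertsF_cons]
    refine (h1 c (List.mem_cons_self)).append
      (ih (fun x hx => h1 x (List.mem_cons_of_mem _ hx)) h2.of_cons) ?_
    intro m hm hm'
    rw [CT.mem_vertsF] at hm'
    obtain ⟨c', hc', hmc'⟩ := hm'
    exact (List.rel_of_pairwise_cons h2 hc') m hm hmc'

theorem nodup_build (hι : Function.Injective ι) :
    ∀ (h : ℕ) (v : V), (CT.vertsT (build G F ι h v)).Nodup := by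
  intro h
  induction h with
  | zero => intro v; simp [build, CT.vertsT_node, CT.vertsF_nil]
  | succ h ih =>
    intro v
    simp only [build, CT.vertsT_node]
    rw [List.nodup_cons]
    constructor
    · intro hmem
      rw [CT.mem_vertsF] at hmem
      obtain ⟨c, hc, hmc⟩ := hmem
      rw [List.mem_map] at hc
      obtain ⟨c₀, hc₀, rfl⟩ := hc
      obtain ⟨u, hu, hanc⟩ := build_desc G F ι h c₀ _ hmc
      rw [hι hu] at hanc
      have h1 := F.anc_depth_le hanc
      obtain ⟨hp, hcv⟩ := F.mem_childL.1 hc₀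
      have hpc : F.par c₀ ≠ c₀ := fun hh => hcv (hh.symm.trans hp)
      have hd : F.depth c₀ = F.depth v + 1 := by rw [F.depth_par c₀ hpc, hp]
      omega
    · refine nodup_vertsF_aux _ (fun x hx => ?_) ?_
      · rw [List.mem_map] at hx
        obtain ⟨c₀, _, rfl⟩ := hx
        exact ih c₀
      rw [List.pairwise_map]
      refine List.Pairwise.imp_of_mem (fun {c₀ c₀'} ha hb hne => ?_) (F.nodup_childL v)
      intro m hm hm'
      obtain ⟨u, hu, hancu⟩ := build_desc G F ι h c₀ _ hm
      obtain ⟨w, hw, hancw⟩ := build_desc G F ι h c₀' _ hm'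
      rw [← hw] at hu
      rw [hι hu] at hancu
      obtain ⟨hp, hcv⟩ := F.mem_childL.1 ha
      obtain ⟨hp', hcv'⟩ := F.mem_childL.1 hb
      exact F.sibling_not_anc hp hcv hp' hcv' hne hancu hancw ⟨0, rfl⟩

end Build

section Forest

attribute [local instance] Classical.propDecidable

variable {V : Type} [Fintype V] (G : SimpleGraph V) (F : TDForest V) (ι : V → ℕ) (k : ℕ)

noncomputable def rootL : List V := (Finset.univ.filter (fun v => F.par v = v)).toList

theorem mem_rootL {r : V} : r ∈ rootL F ↔ F.par r = r := by simp [rootL]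

theorem nodup_rootL : (rootL F).Nodup := Finset.nodup_toList _

noncomputable def codeOf : List CT := (rootL F).map (build G F ι k)

variable {G F ι}

theorem faithF_code (hι : Function.Injective ι) (hdec : IsTDForestDecomp G F)
    (hdep : ∀ v : V, F.depth v ≤ k) :
    CT.FaithF (Pof G ι) [] (codeOf G F ι k) := by
  constructor
  · intro c hc
    rw [codeOf, List.mem_map] at hc
    obtain ⟨r, hr, rfl⟩ := hc
    have hroot := (mem_rootL F).1 hr
    have := faith_build k hι hdec hdep k r (by rw [F.depth_root r hroot]; omega)
    rwa [F.strictAnc_root hroot, List.map_nil] at this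
  · rw [codeOf, List.pairwise_map]
    exact List.Pairwise.imp_of_mem
      (fun ha hb hne => root_nadj hι hdec ((mem_rootL F).1 ha) ((mem_rootL F).1 hb) hne k k)
      (nodup_rootL F)

theorem valid_code (hdep : ∀ v : V, F.depth v ≤ k) :
    ∀ t ∈ codeOf G F ι k, CT.Valid k 0 t := by
  intro t ht
  rw [codeOf, List.mem_map] at ht
  obtain ⟨r, hr, rfl⟩ := ht
  have hroot := (mem_rootL F).1 hr
  have := valid_build (G := G) (F := F) (ι := ι) k hdep k r (by rw [F.depth_root r hroot]; omega)
  rw [F.depth_root r hroot] at this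
  simpa using this

theorem complete_code (hdep : ∀ v : V, F.depth v ≤ k) (u : V) :
    ι u ∈ CT.vertsF (codeOf G F ι k) := by
  obtain ⟨r, m, hr, hm⟩ := F.exists_root u
  have hmem := mem_build (G := G) (F := F) (ι := ι) k hdep m u r k hm (by rw [F.depth_root r hr]; omega)
  rw [CT.mem_vertsF]
  exact ⟨build G F ι k r, List.mem_map_of_mem ((mem_rootL F).2 hr), hmem⟩

theorem range_code {m : ℕ} (hm : m ∈ CT.vertsF (codeOf G F ι k)) : ∃ u, ι u = m := by
  rw [CT.mem_vertsF] at hm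
  obtain ⟨c, hc, hmc⟩ := hm
  rw [codeOf, List.mem_map] at hc
  obtain ⟨r, _, rfl⟩ := hc
  obtain ⟨u, hu, _⟩ := build_desc G F ι k r m hmc
  exact ⟨u, hu⟩

theorem nodup_code (hι : Function.Injective ι) :
    (CT.vertsF (codeOf G F ι k)).Nodup := by
  refine nodup_vertsF_aux _ (fun c hc => ?_) ?_
  · rw [codeOf, List.mem_map] at hc
    obtain ⟨r, _, rfl⟩ := hc
    exact nodup_build hι k r
  · rw [codeOf, List.pairwise_map]
    refine List.Pairwise.imp_of_mem (fun {r r'} ha hb hne => ?_) (nodup_rootL F)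
    intro m hm hm'
    obtain ⟨u, hu, hancu⟩ := build_desc G F ι k r m hm
    obtain ⟨w, hw, hancw⟩ := build_desc G F ι k r' m hm'
    rw [← hw] at hu
    rw [hι hu] at hancu
    exact F.root_not_anc ((mem_rootL F).1 ha) ((mem_rootL F).1 hb) hne hancu hancw ⟨0, rfl⟩

end Forest

structure Cex (k N : ℕ) : Type 1 where
  V : Type
  fin : Fintype V
  G : SimpleGraph V
  F : TDForest V
  hdec : IsTDForestDecomp G F
  hdep : ∀ v : V, F.depth v ≤ k
  hbad : ∀ S : Set V, S.ncard ≤ N → ¬(HasOneQueueLayout G ↔ HasOneQueueLayout (G.induce S))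

theorem one_queue_kernel_treedepth (k : ℕ) :
    ∃ N : ℕ, ∀ (V : Type) [Fintype V] (G : SimpleGraph V),
      (∃ F : TDForest V, IsTDForestDecomp G F ∧ ∀ v : V, F.depth v ≤ k) →
      ∃ S : Set V, S.ncard ≤ N ∧
        (HasOneQueueLayout G ↔ HasOneQueueLayout (G.induce S)) := by
  by_contra hN
  have hC : ∀ N : ℕ, Nonempty (Cex k N) := by
    intro N
    by_contra hno
    apply hN
    refine ⟨N, ?_⟩
    intro V _ G hF
    obtain ⟨F, hdec, hdep⟩ := hF
    by_contra hS
    exact hno ⟨⟨V, ‹Fintype V›, G, F, hdec, hdep, fun S h hiff => hS ⟨S, h, hiff⟩⟩⟩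
  let C : ∀ N, Cex k N := fun N => Classical.choice (hC N)
  have noLay : ∀ N, ¬ HasOneQueueLayout (C N).G := by
    intro N hlay
    exact (C N).hbad ∅ (by simp) (iff_of_true hlay (layout_empty _))
  have smallLay : ∀ N (S : Set (C N).V), S.ncard ≤ N →
      HasOneQueueLayout ((C N).G.induce S) := by
    intro N S hS
    by_contra h
    exact (C N).hbad S hS (iff_of_false (noLay N) h)
  have big : ∀ N, N < @Fintype.card (C N).V (C N).fin := by
    intro N
    letI := (C N).fin
    by_contra h
    push_neg at h
    have hcard : (Set.univ : Set (C N).V).ncard ≤ N := by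
      rw [Set.ncard_univ, Nat.card_eq_fintype_card]; exact h
    exact noLay N (layout_univ (smallLay N Set.univ hcard))
  -- index sequence
  let n : ℕ → ℕ := fun t => Nat.rec 0 (fun _ prev => @Fintype.card (C prev).V (C prev).fin) t
  have hn_succ : ∀ t, n (t+1) = @Fintype.card (C (n t)).V (C (n t)).fin := fun t => rfl
  have hmono : StrictMono n := strictMono_nat_of_lt_succ (fun t => by rw [hn_succ]; exact big (n t))
  -- injections into ℕ
  let ιf : ∀ N, (C N).V → ℕ := fun N v => ((@Fintype.equivFin _ (C N).fin) v).val
  have hιf : ∀ N, Function.Injective (ιf N) := fun N a b h => by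
    exact (@Fintype.equivFin _ (C N).fin).injective (Fin.val_injective h)
  -- codes
  let code : ℕ → List CT := fun t =>
    @codeOf (C (n t)).V (C (n t)).fin (C (n t)).G (C (n t)).F (ιf (n t)) k
  have hval : ∀ t, ∀ x ∈ code t, x ∈ {c : CT | CT.Valid k 0 c} := by
    intro t x hx
    letI := (C (n t)).fin
    exact valid_code k (C (n t)).hdep x hx
  obtain ⟨s, t, hst, hemb⟩ :=
    ((CT.valid_pwo k 0).partiallyWellOrderedOn_sublistForall₂ CT.Emb) (fun t => ⟨code t, hval t⟩)
  -- apply the main embedding lemma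
  letI finS := (C (n s)).fin
  letI finT := (C (n t)).fin
  have hPs := Pof_irrefl (C (n s)).G (hιf (n s))
  have hPt := Pof_irrefl (C (n t)).G (hιf (n t))
  have stmt2 := CT.main_embF hPs hPt hemb [] []
    (faithF_code k (hιf (n s)) (C (n s)).hdec (C (n s)).hdep)
    (faithF_code k (hιf (n t)) (C (n t)).hdec (C (n t)).hdep)
  obtain ⟨L, hfst, hsnd, hpq, -⟩ := stmt2
  -- construct the embedding φ
  have hmemL : ∀ u : (C (n s)).V, ∃ p, p ∈ L ∧ p.1 = ιf (n s) u := by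
    intro u
    have h1 : ιf (n s) u ∈ L.map Prod.fst := by
      rw [hfst]; exact complete_code k (C (n s)).hdep u
    obtain ⟨p, hp, hp1⟩ := List.mem_map.1 h1
    exact ⟨p, hp, hp1⟩
  let pfn : (C (n s)).V → ℕ × ℕ := fun u => Classical.choose (hmemL u)
  have hpfn : ∀ u, pfn u ∈ L ∧ (pfn u).1 = ιf (n s) u := fun u => Classical.choose_spec (hmemL u)
  have hsndmem : ∀ u, (pfn u).2 ∈ CT.vertsF (code t) := fun u =>
    hsnd.subset (List.mem_map_of_mem (f := Prod.snd) (hpfn u).1)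
  have hw : ∀ u, ∃ w, ιf (n t) w = (pfn u).2 := fun u => range_code k (hsndmem u)
  let φ : (C (n s)).V → (C (n t)).V := fun u => Classical.choose (hw u)
  have hφ : ∀ u, ιf (n t) (φ u) = (pfn u).2 := fun u => Classical.choose_spec (hw u)
  have hsnodup : (L.map Prod.snd).Nodup := (nodup_code k (hιf (n t))).sublist hsnd
  have hpinj : ∀ p ∈ L, ∀ q ∈ L, p.2 = q.2 → p = q := by
    intro p hp q hq h
    exact List.inj_on_of_nodup_map hsnodup hp hq h
  have hφinj : Function.Injective φ := by
    intro a b h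
    have h2 : (pfn a).2 = (pfn b).2 := by rw [← hφ a, ← hφ b, h]
    have h3 := hpinj _ (hpfn a).1 _ (hpfn b).1 h2
    have h4 : ιf (n s) a = ιf (n s) b := by rw [← (hpfn a).2, ← (hpfn b).2, h3]
    exact hιf (n s) h4
  have hadj : ∀ u w, (C (n s)).G.Adj u w ↔ (C (n t)).G.Adj (φ u) (φ w) := by
    intro u w
    rw [← Pof_iff (C (n s)).G (hιf (n s)), ← Pof_iff (C (n t)).G (hιf (n t))]
    rw [← (hpfn u).2, ← (hpfn w).2, hφ u, hφ w]
    exact hpq _ (hpfn u).1 _ (hpfn w).1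
  -- conclude
  set S : Set (C (n t)).V := Set.range φ with hSdef
  have hcard : S.ncard ≤ n t := by
    have h1 : S.ncard ≤ (Set.univ : Set (C (n s)).V).ncard := by
      rw [hSdef, ← Set.image_univ]
      exact Set.ncard_image_le (Set.toFinite _)
    rw [Set.ncard_univ, Nat.card_eq_fintype_card] at h1
    have h2 : Fintype.card (C (n s)).V = n (s+1) := (hn_succ s).symm
    have h3 : n (s+1) ≤ n t := hmono.monotone (Nat.succ_le_of_lt hst)
    exact le_trans h1 (le_of_eq_of_le h2 h3)
  have hlay := smallLay (n t) S hcard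
  apply noLay (n s)
  refine layout_transfer (fun u => (⟨φ u, Set.mem_range_self u⟩ : S)) ?_ ?_ hlay
  · intro a b h
    exact hφinj (congrArg Subtype.val h)
  · intro u w
    rw [hadj u w]
    simp [SimpleGraph.comap]
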